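/- Let α ∈ (0,1), β > 0 and a₂ > a₁ > 0, b₂ ≥ b₁ ≥ 0 satisfy a₂b₁ = a₁b₂ (restriction (T1)) and the strict inequality a₂ > 2b₂·cosh(βπ/2)·√(1 + cot²(απ/2)·tanh²(βπ/2)) (strict restriction (T2₂)). Then for every fixed s₀ ≥ 0 there exists p₀ > 0 such that for all p > p₀, with s = s₀ + ip, Im P(s)·Re Q(s) − Re P(s)·Im Q(s) > 0. (In particular, wherever Q(s) ≠ 0, Im Ẽ(s) > 0 and hence Im M²(s) < 0 for M²(s) = Q(s)/P(s).) -/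

import Mathlib

open Filter Topology


/-- `φ_{a,b}(s) = 1 + a·s^α + b·(s^{α+iβ} + s^{α−iβ})`, with principal complex powers. -/
noncomputable def phi (α β a b : ℝ) (s : ℂ) : ℂ :=
  1 + (a : ℂ) * s ^ (α : ℂ) +
    (b : ℂ) * (s ^ ((α : ℂ) + Complex.I * (β : ℂ)) + s ^ ((α : ℂ) - Complex.I * (β : ℂ)))

/-- The constant `cosh(βπ/2)·√(1 + cot²(απ/2)·tanh²(βπ/2))` appearing in restrictions (T2). -/
noncomputable def Ccot (α β : ℝ) : ℝ :=
  Real.cosh (β * (Real.pi / 2)) *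
    Real.sqrt (1 + (Real.cot (α * (Real.pi / 2)) * Real.tanh (β * (Real.pi / 2))) ^ 2)

lemma cpow_im' (s : ℂ) (hs : s ≠ 0) (c : ℂ) :
    (s ^ c).im = Real.exp (c.re * Real.log ‖s‖ - c.im * s.arg) *
      Real.sin (c.re * s.arg + c.im * Real.log ‖s‖) := by
  rw [Complex.cpow_def_of_ne_zero hs, Complex.exp_im]
  congr 2
  · simp [Complex.mul_re, Complex.log_re, Complex.log_im]; ring
  · simp [Complex.mul_im, Complex.log_re, Complex.log_im]; ring

lemma amp_bound (u v x : ℝ) : -(Real.sqrt (u^2 + v^2)) ≤ u * Real.cos x + v * Real.sin x := by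
  have h := Real.sin_sq_add_cos_sq x
  have h2 : 0 ≤ u^2 + v^2 := by positivity
  have h3 := Real.sq_sqrt h2
  have h4 := Real.sqrt_nonneg (u^2+v^2)
  nlinarith [sq_nonneg (u * Real.sin x - v * Real.cos x),
    sq_nonneg (u * Real.cos x + v * Real.sin x + Real.sqrt (u^2+v^2))]

lemma sqrt_amp_eq (α β : ℝ) (hα : α ∈ Set.Ioo (0:ℝ) 1) :
    Real.sqrt ((Real.cosh (β * (Real.pi/2)))^2 * (Real.sin (α * (Real.pi/2)))^2 +
      (Real.sinh (β * (Real.pi/2)))^2 * (Real.cos (α * (Real.pi/2)))^2)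
      = Real.sin (α * (Real.pi/2)) * Ccot α β := by
  obtain ⟨hα0, hα1⟩ := hα
  have hpi := Real.pi_pos
  have hS : 0 < Real.sin (α * (Real.pi/2)) := by
    apply Real.sin_pos_of_pos_of_lt_pi
    · positivity
    · nlinarith
  have hC : 0 < Real.cosh (β * (Real.pi/2)) := Real.cosh_pos _
  have key : (Real.cosh (β * (Real.pi/2)))^2 * (Real.sin (α * (Real.pi/2)))^2 +
      (Real.sinh (β * (Real.pi/2)))^2 * (Real.cos (α * (Real.pi/2)))^2
      = (Real.sin (α * (Real.pi/2)) * Real.cosh (β * (Real.pi/2)))^2 *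
        (1 + (Real.cot (α * (Real.pi/2)) * Real.tanh (β * (Real.pi/2))) ^ 2) := by
    rw [Real.cot_eq_cos_div_sin, Real.tanh_eq_sinh_div_cosh]
    set S := Real.sin (α * (Real.pi/2))
    set Co := Real.cos (α * (Real.pi/2))
    set CH := Real.cosh (β * (Real.pi/2))
    set SH := Real.sinh (β * (Real.pi/2))
    field_simp
  rw [key, Real.sqrt_mul (sq_nonneg _), Real.sqrt_sq (by positivity)]
  rw [Ccot]; ring

lemma gpi_pos (α β a₁ a₂ b₁ b₂ : ℝ) (hα : α ∈ Set.Ioo (0:ℝ) 1)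
    (ha₁ : 0 < a₁) (ha : a₁ < a₂)
    (hT1 : a₂ * b₁ = a₁ * b₂) (hT2s : a₂ > 2 * b₂ * Ccot α β) :
    0 < (a₂ - a₁) * Real.sin (α * (Real.pi/2)) -
      (b₂ - b₁) * (2 * Real.sqrt ((Real.cosh (β * (Real.pi/2)))^2 * (Real.sin (α * (Real.pi/2)))^2 +
        (Real.sinh (β * (Real.pi/2)))^2 * (Real.cos (α * (Real.pi/2)))^2)) := by
  rw [sqrt_amp_eq α β hα]
  have hpi := Real.pi_pos
  have hS : 0 < Real.sin (α * (Real.pi/2)) := by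
    apply Real.sin_pos_of_pos_of_lt_pi
    · have := hα.1; positivity
    · nlinarith [hα.1, hα.2]
  have hCc : 0 ≤ Ccot α β := by
    unfold Ccot; positivity
  have hkey : 0 < (a₂ - a₁) - 2 * (b₂ - b₁) * Ccot α β := by
    have h2 : 0 < a₂ := lt_trans ha₁ ha
    nlinarith [mul_pos (sub_pos.mpr ha) (sub_pos.mpr hT2s)]
  nlinarith [mul_pos hS hkey]

lemma arg_tendsto (s₀ : ℝ) :
    Tendsto (fun p : ℝ => ((s₀ : ℂ) + Complex.I * (p : ℂ)).arg) atTop (𝓝 (Real.pi / 2)) := by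
  have h0 : Tendsto (fun p : ℝ => ((s₀ / p : ℝ) : ℂ) + Complex.I) atTop (𝓝 Complex.I) := by
    have : Tendsto (fun p : ℝ => s₀ / p) atTop (𝓝 0) :=
      tendsto_const_nhds.div_atTop tendsto_id
    have h2 : Tendsto (fun p : ℝ => ((s₀ / p : ℝ) : ℂ)) atTop (𝓝 (0:ℂ)) := by
      exact_mod_cast (Complex.continuous_ofReal.tendsto 0).comp this
    simpa using h2.add tendsto_const_nhds
  have hc : ContinuousAt Complex.arg Complex.I :=
    Complex.continuousAt_arg (by simp [Complex.slitPlane])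
  have h1 : Tendsto (fun p : ℝ => (((s₀ / p : ℝ) : ℂ) + Complex.I).arg) atTop
      (𝓝 (Real.pi / 2)) := by
    have := hc.tendsto.comp h0
    simpa [Complex.arg_I, Function.comp_def] using this
  apply h1.congr'
  filter_upwards [eventually_gt_atTop (0:ℝ)] with p hp
  have : ((s₀:ℂ) + Complex.I * (p:ℂ)) = (p:ℂ) * (((s₀ / p : ℝ) : ℂ) + Complex.I) := by
    push_cast
    rw [mul_add, mul_div_cancel₀ _ (by exact_mod_cast hp.ne' : (p:ℂ) ≠ 0)]
    ring
  rw [this, Complex.arg_real_mul _ hp]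

/-- Under `a₂ > a₁ > 0`, `b₂ ≥ b₁ ≥ 0`, (T1) and the strict restriction (T2₂):
for every `s₀ ≥ 0` there is `p₀ > 0` such that for all `p > p₀`, with `s = s₀ + ip`,
`Im P(s)·Re Q(s) − Re P(s)·Im Q(s) > 0`; in particular, wherever `Q(s) ≠ 0`,
`Im Ẽ(s) > 0` and hence `Im M²(s) < 0` for `M² = Q/P` (wherever `P(s) ≠ 0`). -/
theorem stmt_15 (α β a₁ a₂ b₁ b₂ : ℝ) (hα : α ∈ Set.Ioo (0:ℝ) 1) (hβ : 0 < β)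
    (ha₁ : 0 < a₁) (ha : a₁ < a₂) (hb₁ : 0 ≤ b₁) (hb : b₁ ≤ b₂)
    (hT1 : a₂ * b₁ = a₁ * b₂) (hT2s : a₂ > 2 * b₂ * Ccot α β) :
    ∀ s₀ : ℝ, 0 ≤ s₀ → ∃ p₀ : ℝ, 0 < p₀ ∧ ∀ p : ℝ, p₀ < p →
      0 < (phi α β a₂ b₂ ((s₀ : ℂ) + Complex.I * (p : ℂ))).im *
            (phi α β a₁ b₁ ((s₀ : ℂ) + Complex.I * (p : ℂ))).re -
          (phi α β a₂ b₂ ((s₀ : ℂ) + Complex.I * (p : ℂ))).re *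
            (phi α β a₁ b₁ ((s₀ : ℂ) + Complex.I * (p : ℂ))).im ∧
      (phi α β a₁ b₁ ((s₀ : ℂ) + Complex.I * (p : ℂ)) ≠ 0 →
        0 < (phi α β a₂ b₂ ((s₀ : ℂ) + Complex.I * (p : ℂ)) /
              phi α β a₁ b₁ ((s₀ : ℂ) + Complex.I * (p : ℂ))).im) ∧
      (phi α β a₂ b₂ ((s₀ : ℂ) + Complex.I * (p : ℂ)) ≠ 0 →
        (phi α β a₁ b₁ ((s₀ : ℂ) + Complex.I * (p : ℂ)) /
          phi α β a₂ b₂ ((s₀ : ℂ) + Complex.I * (p : ℂ))).im < 0) := by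
  intro s₀ hs₀
  -- the lower-bound function of the argument
  set g : ℝ → ℝ := fun t => (a₂ - a₁) * Real.sin (α * t) -
      (b₂ - b₁) * (2 * Real.sqrt ((Real.cosh (β * t))^2 * (Real.sin (α * t))^2 +
        (Real.sinh (β * t))^2 * (Real.cos (α * t))^2)) with hgdef
  have hgc : Continuous g := by
    apply Continuous.sub
    · fun_prop
    · fun_prop
  have hgpi : 0 < g (Real.pi / 2) := gpi_pos α β a₁ a₂ b₁ b₂ hα ha₁ ha hT1 hT2s
  have htend : Tendsto (fun p : ℝ => g (((s₀ : ℂ) + Complex.I * (p : ℂ)).arg)) atTop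
      (𝓝 (g (Real.pi / 2))) := (hgc.continuousAt.tendsto).comp (arg_tendsto s₀)
  have hev : ∀ᶠ p : ℝ in atTop,
      0 < p ∧ 0 < g (((s₀ : ℂ) + Complex.I * (p : ℂ)).arg) :=
    (eventually_gt_atTop 0).and (htend.eventually (lt_mem_nhds hgpi))
  obtain ⟨N, hN⟩ := eventually_atTop.mp hev
  refine ⟨max N 1, lt_of_lt_of_le one_pos (le_max_right _ _), fun p hp => ?_⟩
  obtain ⟨hp0, hgp⟩ := hN p (le_of_lt (lt_of_le_of_lt (le_max_left _ _) hp))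
  set s : ℂ := (s₀ : ℂ) + Complex.I * (p : ℂ) with hsdef
  have hsim : s.im = p := by simp [hsdef]
  have hs : s ≠ 0 := fun h => by rw [h] at hsim; simp at hsim; linarith
  set L := Real.log ‖s‖ with hLdef
  set θ := s.arg with hθdef
  -- imaginary parts of the powers
  have hF : (s ^ (α:ℂ)).im = Real.exp (α * L) * Real.sin (α * θ) := by
    have := cpow_im' s hs (α:ℂ)
    simpa using this
  have hG1 : (s ^ ((α:ℂ) + Complex.I * (β:ℂ))).im
      = Real.exp (α * L - β * θ) * Real.sin (α * θ + β * L) := by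
    have := cpow_im' s hs ((α:ℂ) + Complex.I * (β:ℂ))
    simpa using this
  have hG2 : (s ^ ((α:ℂ) - Complex.I * (β:ℂ))).im
      = Real.exp (α * L + β * θ) * Real.sin (α * θ - β * L) := by
    have := cpow_im' s hs ((α:ℂ) - Complex.I * (β:ℂ))
    rw [this]
    norm_num
    ring_nf
    simp only [hLdef, hθdef]; ring
  -- real/imaginary parts of phi
  have hre : ∀ a b : ℝ, (phi α β a b s).re = 1 + a * (s ^ (α:ℂ)).re +
      b * ((s ^ ((α:ℂ) + Complex.I * (β:ℂ))).re + (s ^ ((α:ℂ) - Complex.I * (β:ℂ))).re) := by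
    intro a b; simp [phi, Complex.add_re, Complex.mul_re]
  have him : ∀ a b : ℝ, (phi α β a b s).im = a * (s ^ (α:ℂ)).im +
      b * ((s ^ ((α:ℂ) + Complex.I * (β:ℂ))).im + (s ^ ((α:ℂ) - Complex.I * (β:ℂ))).im) := by
    intro a b; simp [phi, Complex.add_im, Complex.mul_im]
  -- the key quantity
  have hW : (phi α β a₂ b₂ s).im * (phi α β a₁ b₁ s).re -
      (phi α β a₂ b₂ s).re * (phi α β a₁ b₁ s).im
      = (a₂ - a₁) * (s ^ (α:ℂ)).im +
        (b₂ - b₁) * ((s ^ ((α:ℂ) + Complex.I * (β:ℂ))).im +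
          (s ^ ((α:ℂ) - Complex.I * (β:ℂ))).im) := by
    rw [hre, hre, him, him]
    linear_combination ((s ^ (α:ℂ)).im *
      ((s ^ ((α:ℂ) + Complex.I * (β:ℂ))).re + (s ^ ((α:ℂ) - Complex.I * (β:ℂ))).re) -
      (s ^ (α:ℂ)).re *
      ((s ^ ((α:ℂ) + Complex.I * (β:ℂ))).im + (s ^ ((α:ℂ) - Complex.I * (β:ℂ))).im)) * hT1
  have hWpos : 0 < (phi α β a₂ b₂ s).im * (phi α β a₁ b₁ s).re -
      (phi α β a₂ b₂ s).re * (phi α β a₁ b₁ s).im := by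
    rw [hW, hF, hG1, hG2]
    have hb' : 0 ≤ b₂ - b₁ := by linarith
    have hexp : 0 < Real.exp (α * L) := Real.exp_pos _
    -- amplitude bound for the oscillating part
    have hamp : -(2 * Real.sqrt ((Real.cosh (β * θ))^2 * (Real.sin (α * θ))^2 +
          (Real.sinh (β * θ))^2 * (Real.cos (α * θ))^2))
        ≤ Real.exp (-(β * θ)) * Real.sin (α * θ + β * L) +
          Real.exp (β * θ) * Real.sin (α * θ - β * L) := by
      have h := amp_bound (2 * Real.cosh (β * θ) * Real.sin (α * θ))
        (-(2 * Real.sinh (β * θ) * Real.cos (α * θ))) (β * L)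
      have hrw : (2 * Real.cosh (β * θ) * Real.sin (α * θ))^2 +
          (-(2 * Real.sinh (β * θ) * Real.cos (α * θ)))^2
          = 2^2 * ((Real.cosh (β * θ))^2 * (Real.sin (α * θ))^2 +
            (Real.sinh (β * θ))^2 * (Real.cos (α * θ))^2) := by ring
      rw [hrw, Real.sqrt_mul (by norm_num), Real.sqrt_sq (by norm_num)] at h
      have hrw2 : Real.exp (-(β * θ)) * Real.sin (α * θ + β * L) +
          Real.exp (β * θ) * Real.sin (α * θ - β * L)
          = 2 * Real.cosh (β * θ) * Real.sin (α * θ) * Real.cos (β * L) +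
            (-(2 * Real.sinh (β * θ) * Real.cos (α * θ))) * Real.sin (β * L) := by
        rw [Real.sin_add, Real.sin_sub, Real.cosh_eq, Real.sinh_eq]
        ring
      rw [hrw2]
      exact h
    have hfact : (a₂ - a₁) * (Real.exp (α * L) * Real.sin (α * θ)) +
        (b₂ - b₁) * (Real.exp (α * L - β * θ) * Real.sin (α * θ + β * L) +
          Real.exp (α * L + β * θ) * Real.sin (α * θ - β * L))
        = Real.exp (α * L) * ((a₂ - a₁) * Real.sin (α * θ) +
          (b₂ - b₁) * (Real.exp (-(β * θ)) * Real.sin (α * θ + β * L) +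
            Real.exp (β * θ) * Real.sin (α * θ - β * L))) := by
      rw [show α * L - β * θ = α * L + -(β * θ) by ring, Real.exp_add, Real.exp_add]
      ring
    rw [hfact]
    apply mul_pos hexp
    have := mul_le_mul_of_nonneg_left hamp hb'
    simp only [hgdef] at hgp
    nlinarith [hgp]
  refine ⟨hWpos, fun hQ => ?_, fun hP => ?_⟩
  · rw [Complex.div_im, div_sub_div_same]
    exact div_pos hWpos (Complex.normSq_pos.mpr hQ)
  · rw [Complex.div_im, div_sub_div_same]
    apply div_neg_of_neg_of_pos _ (Complex.normSq_pos.mpr hP)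
    linarith
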